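/- Every complete bipartite graph K_{m,n} with m, n ≥ 2 is degree-choosable: for every list assignment L with |L(v)| = deg(v) for every vertex v, K_{m,n} has a proper L-coloring. -/

import Mathlib

open Finset

/-- `f` is a proper `L`-coloring of `G`: every vertex gets a color from its list and
adjacent vertices get different colors. -/
def properListColoring {V : Type*} (G : SimpleGraph V) (L : V → Finset ℕ) (f : V → ℕ) : Prop :=
  (∀ v, f v ∈ L v) ∧ ∀ u v, G.Adj u v → f u ≠ f v

theorem stmt_10 (m n : ℕ) (hm : 2 ≤ m) (hn : 2 ≤ n) (L : Fin m ⊕ Fin n → Finset ℕ)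
    (hx : ∀ x : Fin m, (L (Sum.inl x)).card = n)
    (hy : ∀ y : Fin n, (L (Sum.inr y)).card = m) :
    ∃ f, properListColoring (completeBipartiteGraph (Fin m) (Fin n)) L f := by
  classical
  have hLx : ∀ x : Fin m, (L (Sum.inl x)).Nonempty := fun x =>
    Finset.card_pos.mp (by rw [hx]; omega)
  have hLy : ∀ y : Fin n, (L (Sum.inr y)).Nonempty := fun y =>
    Finset.card_pos.mp (by rw [hy]; omega)
  by_cases h1 : ∃ x1 x2 : Fin m, x1 ≠ x2 ∧ ((L (Sum.inl x1)) ∩ (L (Sum.inl x2))).Nonempty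
  · -- Case 1: two left vertices share a color
    obtain ⟨x1, x2, hx12, c, hc⟩ := h1
    rw [Finset.mem_inter] at hc
    set g : Fin m → ℕ := fun x => if x = x1 ∨ x = x2 then c else (L (Sum.inl x)).min' (hLx x)
      with hg
    have hgmem : ∀ x, g x ∈ L (Sum.inl x) := by
      intro x
      by_cases h : x = x1 ∨ x = x2
      · rcases h with h | h <;> subst h <;> simp [hg, hc.1, hc.2]
      · simp only [hg, if_neg h]
        exact Finset.min'_mem _ _
    set S := Finset.image g Finset.univ with hS
    have hScard : S.card < m := by
      have hsub : S ⊆ Finset.image g (Finset.univ.erase x2) := by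
        intro a ha
        simp only [hS, Finset.mem_image] at ha ⊢
        obtain ⟨x, -, rfl⟩ := ha
        by_cases h : x = x2
        · subst h
          refine ⟨x1, Finset.mem_erase.mpr ⟨hx12, Finset.mem_univ _⟩, ?_⟩
          simp [hg]
        · exact ⟨x, Finset.mem_erase.mpr ⟨h, Finset.mem_univ _⟩, rfl⟩
      calc S.card ≤ (Finset.image g (Finset.univ.erase x2)).card := Finset.card_le_card hsub
        _ ≤ (Finset.univ.erase x2).card := Finset.card_image_le
        _ < m := by
            rw [Finset.card_erase_of_mem (Finset.mem_univ _), Finset.card_univ, Fintype.card_fin]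
            omega
    have hfree : ∀ y : Fin n, (L (Sum.inr y) \ S).Nonempty := by
      intro y
      rw [Finset.sdiff_nonempty]
      intro hsub
      have := Finset.card_le_card hsub
      rw [hy] at this
      omega
    refine ⟨Sum.elim g (fun y => (L (Sum.inr y) \ S).min' (hfree y)), ?_, ?_⟩
    · rintro (x | y)
      · exact hgmem x
      · exact (Finset.mem_sdiff.mp (Finset.min'_mem _ _)).1
    · rintro (x | y) (x' | y') hadj <;> simp only [completeBipartiteGraph_adj] at hadj <;>
        try simp at hadj
      · -- inl, inr
        intro h
        have h2 := (Finset.mem_sdiff.mp (Finset.min'_mem (L (Sum.inr y') \ S) (hfree y'))).2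
        rw [Sum.elim_inl, Sum.elim_inr] at h
        exact h2 (h ▸ Finset.mem_image_of_mem g (Finset.mem_univ x))
      · intro h
        have h2 := (Finset.mem_sdiff.mp (Finset.min'_mem (L (Sum.inr y) \ S) (hfree y))).2
        rw [Sum.elim_inl, Sum.elim_inr] at h
        exact h2 (h ▸ Finset.mem_image_of_mem g (Finset.mem_univ x'))
  by_cases h2 : ∃ y1 y2 : Fin n, y1 ≠ y2 ∧ ((L (Sum.inr y1)) ∩ (L (Sum.inr y2))).Nonempty
  · -- Case 2: two right vertices share a color
    obtain ⟨y1, y2, hy12, c, hc⟩ := h2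
    rw [Finset.mem_inter] at hc
    set g : Fin n → ℕ := fun y => if y = y1 ∨ y = y2 then c else (L (Sum.inr y)).min' (hLy y)
      with hg
    have hgmem : ∀ y, g y ∈ L (Sum.inr y) := by
      intro y
      by_cases h : y = y1 ∨ y = y2
      · rcases h with h | h <;> subst h <;> simp [hg, hc.1, hc.2]
      · simp only [hg, if_neg h]
        exact Finset.min'_mem _ _
    set S := Finset.image g Finset.univ with hS
    have hScard : S.card < n := by
      have hsub : S ⊆ Finset.image g (Finset.univ.erase y2) := by
        intro a ha
        simp only [hS, Finset.mem_image] at ha ⊢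
        obtain ⟨y, -, rfl⟩ := ha
        by_cases h : y = y2
        · subst h
          refine ⟨y1, Finset.mem_erase.mpr ⟨hy12, Finset.mem_univ _⟩, ?_⟩
          simp [hg]
        · exact ⟨y, Finset.mem_erase.mpr ⟨h, Finset.mem_univ _⟩, rfl⟩
      calc S.card ≤ (Finset.image g (Finset.univ.erase y2)).card := Finset.card_le_card hsub
        _ ≤ (Finset.univ.erase y2).card := Finset.card_image_le
        _ < n := by
            rw [Finset.card_erase_of_mem (Finset.mem_univ _), Finset.card_univ, Fintype.card_fin]
            omega
    have hfree : ∀ x : Fin m, (L (Sum.inl x) \ S).Nonempty := by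
      intro x
      rw [Finset.sdiff_nonempty]
      intro hsub
      have := Finset.card_le_card hsub
      rw [hx] at this
      omega
    refine ⟨Sum.elim (fun x => (L (Sum.inl x) \ S).min' (hfree x)) g, ?_, ?_⟩
    · rintro (x | y)
      · exact (Finset.mem_sdiff.mp (Finset.min'_mem _ _)).1
      · exact hgmem y
    · rintro (x | y) (x' | y') hadj <;> simp only [completeBipartiteGraph_adj] at hadj <;>
        try simp at hadj
      · intro h
        have h2 := (Finset.mem_sdiff.mp (Finset.min'_mem (L (Sum.inl x) \ S) (hfree x))).2
        rw [Sum.elim_inl, Sum.elim_inr] at h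
        exact h2 (h ▸ Finset.mem_image_of_mem g (Finset.mem_univ y'))
      · intro h
        have h2 := (Finset.mem_sdiff.mp (Finset.min'_mem (L (Sum.inl x') \ S) (hfree x'))).2
        rw [Sum.elim_inl, Sum.elim_inr] at h
        exact h2 (h ▸ Finset.mem_image_of_mem g (Finset.mem_univ y))
  · -- Case 3: left lists pairwise disjoint and right lists pairwise disjoint
    push_neg at h1 h2
    have hdL : ∀ x1 x2 : Fin m, x1 ≠ x2 → Disjoint (L (Sum.inl x1)) (L (Sum.inl x2)) := by
      intro x1 x2 hne
      rw [Finset.disjoint_iff_inter_eq_empty, ← Finset.not_nonempty_iff_eq_empty]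
      exact Finset.not_nonempty_iff_eq_empty.mpr (h1 x1 x2 hne)
    have hdR : ∀ y1 y2 : Fin n, y1 ≠ y2 → Disjoint (L (Sum.inr y1)) (L (Sum.inr y2)) := by
      intro y1 y2 hne
      rw [Finset.disjoint_iff_inter_eq_empty, ← Finset.not_nonempty_iff_eq_empty]
      exact Finset.not_nonempty_iff_eq_empty.mpr (h2 y1 y2 hne)
    -- Key: there is a choice of right colors leaving every left list not fully covered
    have key : ∃ d : Fin n → ℕ, (∀ y, d y ∈ L (Sum.inr y)) ∧
        ∀ x : Fin m, ¬ L (Sum.inl x) ⊆ Finset.image d Finset.univ := by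
      -- generic facts about any valid choice of right colors
      have hinj : ∀ c : Fin n → ℕ, (∀ y, c y ∈ L (Sum.inr y)) → Function.Injective c := by
        intro c hcm y y' h
        by_contra hne
        exact Finset.disjoint_left.mp (hdR y y' hne) (hcm y) (h ▸ hcm y')
      have himcard : ∀ c : Fin n → ℕ, (∀ y, c y ∈ L (Sum.inr y)) →
          (Finset.image c Finset.univ).card = n := by
        intro c hcm
        rw [Finset.card_image_of_injective _ (hinj c hcm), Finset.card_univ, Fintype.card_fin]
      have hblocked : ∀ c : Fin n → ℕ, (∀ y, c y ∈ L (Sum.inr y)) → ∀ x : Fin m,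
          L (Sum.inl x) ⊆ Finset.image c Finset.univ →
          L (Sum.inl x) = Finset.image c Finset.univ := by
        intro c hcm x hsub
        apply Finset.eq_of_subset_of_card_le hsub
        rw [himcard c hcm, hx]
      set c0 : Fin n → ℕ := fun y => (L (Sum.inr y)).min' (hLy y) with hc0
      have hc0m : ∀ y, c0 y ∈ L (Sum.inr y) := fun y => Finset.min'_mem _ _
      by_cases hb : ∃ x0 : Fin m, L (Sum.inl x0) ⊆ Finset.image c0 Finset.univ
      · obtain ⟨x0, hx0⟩ := hb
        have hx0eq := hblocked c0 hc0m x0 hx0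
        set y0 : Fin n := ⟨0, by omega⟩ with hy0
        set y1 : Fin n := ⟨1, by omega⟩ with hy1
        have hy01 : y1 ≠ y0 := by
          simp [hy0, hy1, Fin.ext_iff]
        obtain ⟨c', hc'm, hc'ne⟩ :=
          Finset.exists_mem_ne (by rw [hy]; omega : 1 < (L (Sum.inr y0)).card) (c0 y0)
        set c1 : Fin n → ℕ := Function.update c0 y0 c' with hc1
        have hc1m : ∀ y, c1 y ∈ L (Sum.inr y) := by
          intro y
          by_cases h : y = y0
          · subst h; simp [hc1, hc'm]
          · simp [hc1, Function.update_of_ne h, hc0m]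
        refine ⟨c1, hc1m, ?_⟩
        intro x hsub
        have hxeq := hblocked c1 hc1m x hsub
        -- c1 y1 = c0 y1 belongs to L (inl x) and to L (inl x0)
        have h1x : c0 y1 ∈ L (Sum.inl x) := by
          rw [hxeq]
          refine Finset.mem_image.mpr ⟨y1, Finset.mem_univ _, ?_⟩
          simp [hc1, Function.update_of_ne hy01]
        have h1x0 : c0 y1 ∈ L (Sum.inl x0) := by
          rw [hx0eq]
          exact Finset.mem_image_of_mem c0 (Finset.mem_univ y1)
        have hxx0 : x = x0 := by
          by_contra hne
          exact Finset.disjoint_left.mp (hdL x x0 hne) h1x h1x0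
        subst hxx0
        -- now c' ∈ L (inl x) = image c0, contradiction
        have hc'in : c' ∈ Finset.image c0 Finset.univ := by
          rw [← hx0eq, hxeq]
          refine Finset.mem_image.mpr ⟨y0, Finset.mem_univ _, ?_⟩
          simp [hc1]
        obtain ⟨y', -, hy'⟩ := Finset.mem_image.mp hc'in
        by_cases h : y' = y0
        · subst h; exact hc'ne hy'.symm
        · exact Finset.disjoint_left.mp (hdR y' y0 h) (hy' ▸ hc0m y') hc'm
      · push_neg at hb
        exact ⟨c0, hc0m, hb⟩
    obtain ⟨d, hdm, hdfree⟩ := key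
    have hfree : ∀ x : Fin m, (L (Sum.inl x) \ Finset.image d Finset.univ).Nonempty := by
      intro x
      rw [Finset.sdiff_nonempty]
      exact hdfree x
    refine ⟨Sum.elim (fun x => (L (Sum.inl x) \ Finset.image d Finset.univ).min' (hfree x)) d,
      ?_, ?_⟩
    · rintro (x | y)
      · exact (Finset.mem_sdiff.mp (Finset.min'_mem _ _)).1
      · exact hdm y
    · rintro (x | y) (x' | y') hadj <;> simp only [completeBipartiteGraph_adj] at hadj <;>
        try simp at hadj
      · intro h
        have hnotin := (Finset.mem_sdiff.mp (Finset.min'_mem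
          (L (Sum.inl x) \ Finset.image d Finset.univ) (hfree x))).2
        rw [Sum.elim_inl, Sum.elim_inr] at h
        exact hnotin (h ▸ Finset.mem_image_of_mem d (Finset.mem_univ y'))
      · intro h
        have hnotin := (Finset.mem_sdiff.mp (Finset.min'_mem
          (L (Sum.inl x') \ Finset.image d Finset.univ) (hfree x'))).2
        rw [Sum.elim_inl, Sum.elim_inr] at h
        exact hnotin (h ▸ Finset.mem_image_of_mem d (Finset.mem_univ y))
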